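/- The average Age of Incorrect Information under the randomized stationary policy equals ∑_{i≥1} i·P(i) = pq(1−a)·[p + q + (2−p−q)·a] / ((p+q)·Φ(p)·Φ(q)·D), the series being convergent. -/

import Mathlib

lemma aoii_aux (r : ℝ) (h0 : 0 ≤ r) (h1 : r < 1) :
    Summable (fun i : ℕ => ((i : ℝ) + 1) * r ^ i) ∧
    ∑' i : ℕ, ((i : ℝ) + 1) * r ^ i = ((1 - r)⁻¹) ^ 2 := by
  have hn : ‖r‖ < 1 := by rwa [Real.norm_eq_abs, abs_of_nonneg h0]
  have hs1 : Summable (fun i : ℕ => (i : ℝ) * r ^ i) := by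
    have := summable_pow_mul_geometric_of_norm_lt_one (R := ℝ) 1 hn
    simpa using this
  have hs2 : Summable (fun i : ℕ => r ^ i) := summable_geometric_of_norm_lt_one hn
  have hs : Summable (fun i : ℕ => ((i : ℝ) + 1) * r ^ i) := by
    have := hs1.add hs2
    simpa [add_mul] using this
  refine ⟨hs, ?_⟩
  have ht1 : ∑' i : ℕ, (i : ℝ) * r ^ i = r / (1 - r) ^ 2 :=
    tsum_coe_mul_geometric_of_norm_lt_one hn
  have ht2 : ∑' i : ℕ, r ^ i = (1 - r)⁻¹ := tsum_geometric_of_norm_lt_one hn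
  have hr : (1 : ℝ) - r ≠ 0 := by linarith
  calc ∑' i : ℕ, ((i : ℝ) + 1) * r ^ i
      = ∑' i : ℕ, ((i : ℝ) * r ^ i + r ^ i) := by
        congr 1; funext i; ring
    _ = r / (1 - r) ^ 2 + (1 - r)⁻¹ := by rw [Summable.tsum_add hs1 hs2, ht1, ht2]
    _ = ((1 - r)⁻¹) ^ 2 := by field_simp; ring

/-- The average Age of Incorrect Information under the randomized stationary policy. -/
theorem aoii_average (p q a : ℝ)
    (hp : 0 < p) (hp1 : p < 1) (hq : 0 < q) (hq1 : q < 1)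
    (ha : 0 < a) (ha1 : a ≤ 1)
    (Φ : ℝ → ℝ) (hΦ : ∀ x, Φ x = x + (1 - x) * a)
    (D : ℝ) (hD : D = p + q + (1 - p - q) * a)
    (P : ℕ → ℝ)
    (hP0 : P 0 = (p ^ 2 + q ^ 2 + (p + q - p ^ 2 - q ^ 2) * a) / ((p + q) * D))
    (hP : ∀ i : ℕ, 1 ≤ i →
      P i = p * q * (1 - a) ^ i *
        ((1 - q) ^ (i - 1) * Φ q + (1 - p) ^ (i - 1) * Φ p) / ((p + q) * D)) :
    Summable (fun i : ℕ => ((i + 1 : ℕ) : ℝ) * P (i + 1)) ∧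
    ∑' i : ℕ, ((i + 1 : ℕ) : ℝ) * P (i + 1) =
      p * q * (1 - a) * (p + q + (2 - p - q) * a) / ((p + q) * Φ p * Φ q * D) := by
  set r1 : ℝ := (1 - a) * (1 - q) with hr1
  set r2 : ℝ := (1 - a) * (1 - p) with hr2
  have h10 : 0 ≤ r1 := mul_nonneg (by linarith) (by linarith)
  have h11 : r1 < 1 := by nlinarith
  have h20 : 0 ≤ r2 := mul_nonneg (by linarith) (by linarith)
  have h21 : r2 < 1 := by nlinarith
  obtain ⟨S1, T1⟩ := aoii_aux r1 h10 h11
  obtain ⟨S2, T2⟩ := aoii_aux r2 h20 h21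
  set K : ℝ := p * q / ((p + q) * D) with hK
  set A : ℝ := K * (1 - a) * Φ q with hA
  set B : ℝ := K * (1 - a) * Φ p with hB
  have hfun : (fun i : ℕ => ((i + 1 : ℕ) : ℝ) * P (i + 1)) =
      fun i : ℕ => A * (((i : ℝ) + 1) * r1 ^ i) + B * (((i : ℝ) + 1) * r2 ^ i) := by
    funext i
    rw [hP (i + 1) (by omega)]
    simp only [Nat.add_sub_cancel, hA, hB, hK, hr1, hr2]
    push_cast
    rw [pow_succ, mul_pow, mul_pow]
    ring
  rw [hfun]
  have hsum : Summable (fun i : ℕ =>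
      A * (((i : ℝ) + 1) * r1 ^ i) + B * (((i : ℝ) + 1) * r2 ^ i)) :=
    (S1.mul_left A).add (S2.mul_left B)
  refine ⟨hsum, ?_⟩
  rw [Summable.tsum_add (S1.mul_left A) (S2.mul_left B), tsum_mul_left, tsum_mul_left, T1, T2]
  have hΦp : Φ p = p + (1 - p) * a := hΦ p
  have hΦq : Φ q = q + (1 - q) * a := hΦ q
  have hΦp0 : Φ p > 0 := by rw [hΦp]; nlinarith
  have hΦq0 : Φ q > 0 := by rw [hΦq]; nlinarith
  have hr1e : 1 - r1 = Φ q := by rw [hr1, hΦq]; ring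
  have hr2e : 1 - r2 = Φ p := by rw [hr2, hΦp]; ring
  have hD0 : D > 0 := by rw [hD]; nlinarith
  have hpq : p + q > 0 := by linarith
  rw [hr1e, hr2e, hA, hB, hK]
  rw [hΦp] at hΦp0; rw [hΦq] at hΦq0; rw [hΦp, hΦq]
  have e1 : p + (1 - p) * a ≠ 0 := ne_of_gt hΦp0
  have e2 : q + (1 - q) * a ≠ 0 := ne_of_gt hΦq0
  field_simp
  have e3 : q + a * (1 - q) ≠ 0 := by nlinarith
  have e4 : p + a * (1 - p) ≠ 0 := by nlinarith
  field_simp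
  ring
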